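/- In the circulant digraph D(n, [m]) with vertex set ℤ/nℤ, arcs i → i−1 and i → i+k for 1 ≤ k ≤ m (where 1 ≤ m ≤ n−2), the directed distance from vertex 0 to vertex x (with 0 ≤ x < n, representing the residue class) equals min(⌈x/m⌉, n − x). -/
import Mathlib


/-- A directed walk of length `n` from `u` to `v` along the arc relation `A`. -/
def DWalk {V : Type*} (A : V → V → Prop) : ℕ → V → V → Prop
  | 0, u, v => u = v
  | n+1, u, v => ∃ w, A u w ∧ DWalk A n w v

/-- Directed distance: length of a shortest directed path (`⊤` if none exists). -/
noncomputable def ddist {V : Type*} (A : V → V → Prop) (u v : V) : ℕ∞ :=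
  sInf {k : ℕ∞ | ∃ n : ℕ, k = n ∧ DWalk A n u v}

/-- The arc relation of the circulant digraph `D(n,S)`: arc from `i` to `j` iff
`j - i ≡ -1 (mod n)` or `j - i ≡ k (mod n)` for some `k ∈ S`. -/
def circArc (n : ℕ) (S : Set ℕ) : ZMod n → ZMod n → Prop :=
  fun i j => j - i = -1 ∨ ∃ k ∈ S, j - i = (k : ZMod n)

lemma dwalk_back (n m : ℕ) : ∀ (j : ℕ) (u : ZMod n),
    DWalk (circArc n (Set.Icc 1 m)) j u (u - (j : ℕ)) := by
  intro j
  induction j with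
  | zero => intro u; simpa [DWalk] using rfl
  | succ j ih =>
    intro u
    refine ⟨u - 1, Or.inl (by ring), ?_⟩
    have h : u - ((j + 1 : ℕ) : ZMod n) = (u - 1) - (j : ℕ) := by
      push_cast; ring
    rw [h]
    exact ih (u - 1)

lemma dwalk_fwd (n m : ℕ) (hm : 1 ≤ m) :
    ∀ j x : ℕ, j ≤ x → x ≤ m * j → ∀ u : ZMod n,
      DWalk (circArc n (Set.Icc 1 m)) j u (u + (x : ℕ)) := by
  intro j
  induction j with
  | zero =>
    intro x hj hx u
    have hx0 : x = 0 := by omega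
    subst hx0
    simpa [DWalk] using rfl
  | succ j ih =>
    intro x hj hx u
    set k := min m (x - j) with hk
    have hle : j ≤ m * j := Nat.le_mul_of_pos_left j hm
    have hx' : x ≤ m * j + m := by rw [Nat.mul_succ] at hx; exact hx
    have hfacts : 1 ≤ k ∧ j ≤ x - k ∧ x - k ≤ m * j := by
      revert hle hx'
      generalize m * j = M
      intro hle hx'
      omega
    obtain ⟨hk1, h1, h2⟩ := hfacts
    have hkm : k ≤ m := min_le_left _ _
    have hkx : k ≤ x := by omega
    refine ⟨u + (k : ℕ), Or.inr ⟨k, ⟨hk1, hkm⟩, by ring⟩, ?_⟩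
    have hcast : u + (x : ZMod n) = (u + (k : ℕ)) + ((x - k : ℕ) : ZMod n) := by
      rw [Nat.cast_sub hkx]; ring
    rw [hcast]
    exact ih (x - k) h1 h2 (u + (k : ℕ))

lemma dwalk_decomp (n m : ℕ) :
    ∀ (L : ℕ) (u v : ZMod n), DWalk (circArc n (Set.Icc 1 m)) L u v →
      ∃ (a b : ℕ) (s : ℤ), a + b = L ∧ -(b : ℤ) ≤ s ∧ s ≤ (m : ℤ) * a ∧
        v = u + (s : ZMod n) := by
  intro L
  induction L with
  | zero =>
    intro u v h
    have huv : u = v := h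
    exact ⟨0, 0, 0, rfl, by simp, by simp, by simp [← huv]⟩
  | succ L ih =>
    intro u v h
    obtain ⟨w, harc, hw⟩ := h
    obtain ⟨a, b, s, hab, hbs, hsa, hv⟩ := ih w v hw
    rcases harc with h1 | ⟨k, hk, h2⟩
    · refine ⟨a, b + 1, s - 1, by omega, by push_cast; linarith, by linarith, ?_⟩
      have hw' : w = u - 1 := by linear_combination h1
      rw [hv, hw']
      push_cast
      ring
    · have hk1 : 1 ≤ k := hk.1
      have hk2 : k ≤ m := hk.2
      refine ⟨a + 1, b, s + k, by omega, ?_, ?_, ?_⟩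
      · have : (0 : ℤ) ≤ k := by positivity
        linarith
      · have hkZ : (k : ℤ) ≤ m := by exact_mod_cast hk2
        have : (m : ℤ) * (a + 1) = m * a + m := by ring
        push_cast
        linarith
      · have hw' : w = u + (k : ℕ) := by linear_combination h2
        rw [hv, hw']
        push_cast
        ring

theorem stmt7 (n m : ℕ) (hm : 1 ≤ m) (hmn : m ≤ n - 2) (x : ℕ) (hx : x < n) :
    ddist (circArc n (Set.Icc 1 m)) 0 (x : ZMod n) =
      (min ((x + m - 1) / m) (n - x) : ℕ) := by
  have hn3 : 3 ≤ n := by omega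
  have hm0 : 0 < m := hm
  haveI : NeZero n := ⟨by omega⟩
  rcases Nat.eq_zero_or_pos x with rfl | hx1
  · have hq0 : (0 + m - 1) / m = 0 := Nat.div_eq_of_lt (by omega)
    rw [hq0]
    simp only [Nat.zero_eq, Nat.sub_zero, Nat.cast_zero]
    have hmin : min 0 n = 0 := by omega
    rw [hmin]
    apply le_antisymm
    · apply sInf_le
      exact ⟨0, by simp, by simp [DWalk]⟩
    · simp
  · obtain ⟨q, hq⟩ : ∃ q, (x + m - 1) / m = q := ⟨_, rfl⟩
    obtain ⟨r, hr⟩ : ∃ r, (x + m - 1) % m = r := ⟨_, rfl⟩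
    have hdm := Nat.div_add_mod (x + m - 1) m
    rw [hq, hr] at hdm
    have hrm : r < m := by rw [← hr]; exact Nat.mod_lt _ hm0
    rw [hq]
    have hkey : m * q + r + 1 = x + m := by
      revert hdm
      generalize m * q = M
      intro h
      omega
    have hxq : x ≤ m * q := by
      revert hkey
      generalize m * q = M
      intro h
      omega
    have hqx : q ≤ x := by
      have h1 : x + m - 1 ≤ x * m := by
        have h2 : m - 1 ≤ x * (m - 1) := Nat.le_mul_of_pos_left _ hx1
        have h3 : x * (m - 1) + x = x * m := by
          cases m with
          | zero => omega
          | succ m' => rw [Nat.succ_sub_one, ← Nat.mul_succ]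
        revert h2 h3
        generalize x * (m - 1) = A
        generalize x * m = B
        intro h2 h3
        omega
      calc q = (x + m - 1) / m := hq.symm
        _ ≤ x * m / m := Nat.div_le_div_right h1
        _ = x := Nat.mul_div_cancel x hm0
    -- upper bound walk
    have hwalk : DWalk (circArc n (Set.Icc 1 m)) (min q (n - x)) 0 (x : ZMod n) := by
      rcases le_total q (n - x) with hc | hc
      · rw [min_eq_left hc]
        have := dwalk_fwd n m hm q x hqx hxq 0
        simpa using this
      · rw [min_eq_right hc]
        have := dwalk_back n m (n - x) 0
        have hcast : (0 : ZMod n) - ((n - x : ℕ) : ZMod n) = (x : ZMod n) := by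
          rw [Nat.cast_sub hx.le]
          simp [ZMod.natCast_self]
        rw [hcast] at this
        exact this
    apply le_antisymm
    · apply sInf_le
      exact ⟨min q (n - x), rfl, hwalk⟩
    · apply le_sInf
      rintro kk ⟨L, rfl, hwL⟩
      have hLlow : min q (n - x) ≤ L := by
        by_contra hcon
        push_neg at hcon
        have hLq : L < q := lt_of_lt_of_le hcon (min_le_left _ _)
        have hLnx : L < n - x := lt_of_lt_of_le hcon (min_le_right _ _)
        obtain ⟨a, b, s, hab, hbs, hsa, hv⟩ := dwalk_decomp n m L 0 (x : ZMod n) hwL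
        have h0 : ((s : ZMod n)) = (x : ZMod n) := by
          rw [hv, zero_add]
        have hdvd : (n : ℤ) ∣ (s - (x : ℤ)) := by
          rw [← ZMod.intCast_zmod_eq_zero_iff_dvd]
          push_cast
          rw [h0]
          ring
        obtain ⟨t, ht⟩ := hdvd
        have haq : a + 1 ≤ q := by omega
        have ha : (a : ℤ) ≤ (q : ℤ) - 1 := by
          have := haq; push_cast; omega
        have h1 : (m : ℤ) * a ≤ (m : ℤ) * ((q : ℤ) - 1) :=
          mul_le_mul_of_nonneg_left ha (by positivity)
        have hkeyZ : (m : ℤ) * q + r + 1 = x + m := by exact_mod_cast hkey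
        have h2 : (m : ℤ) * ((q : ℤ) - 1) = (m : ℤ) * q - m := by ring
        have hrZ : (0 : ℤ) ≤ r := by positivity
        have hs_lt : s < (x : ℤ) := by linarith
        have hbL : b + x < n := by omega
        have hbLZ : (b : ℤ) < (n : ℤ) - x := by
          have := hbL; push_cast; omega
        have hs_gt : (x : ℤ) - n < s := by linarith
        have h5 : (n : ℤ) * t < 0 := by linarith
        have h6 : -(n : ℤ) < (n : ℤ) * t := by linarith
        have hn0 : (0 : ℤ) < n := by exact_mod_cast (by omega : 0 < n)
        rcases le_or_gt 0 t with htt | htt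
        · have : 0 ≤ (n : ℤ) * t := mul_nonneg (le_of_lt hn0) htt
          linarith
        · have h7 : t ≤ -1 := by omega
          have : (n : ℤ) * t ≤ (n : ℤ) * (-1) := mul_le_mul_of_nonneg_left h7 (le_of_lt hn0)
          linarith
      exact_mod_cast Nat.cast_le.mpr hLlow
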